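/- If ℵ₁ ≤ μ ≤ |γ| ≤ 2^μ and κ = μ⁺, then for any sequence of cardinals ⟨θ_ξ : ξ < γ⟩ with each θ_ξ < κ, there exists a complete set H of guardrails of size at most μ^{ℵ₀}; that is, H ⊆ ∏_{ξ<γ} θ_ξ and every countable partial function in ∏_{ξ<γ} θ_ξ extends to a total function in H. -/
import Mathlib


open Cardinal

universe u

/-- If `ℵ₁ ≤ μ ≤ |γ| ≤ 2^μ` and `κ = μ⁺`, then for any sequence of (nonempty) sets
`⟨θ_ξ : ξ < γ⟩` each of size `< κ` (i.e. `≤ μ`... here `#(θ ξ) < succ μ`), there is a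
complete set `H ⊆ ∏_{ξ<γ} θ_ξ` of guardrails of size at most `μ^{ℵ₀}`: every countable
partial function in `∏_{ξ<γ} θ_ξ` extends to a total function in `H`. -/
theorem stmt_10 {ι : Type u} (θ : ι → Type u) [∀ ξ, Nonempty (θ ξ)]
    (μ : Cardinal.{u}) (hμ : Cardinal.aleph 1 ≤ μ) (h1 : μ ≤ #ι) (h2 : #ι ≤ 2 ^ μ)
    (hθ : ∀ ξ, #(θ ξ) < Order.succ μ) :
    ∃ H : Set (∀ ξ, θ ξ), #H ≤ μ ^ ℵ₀ ∧
      ∀ s : Set ι, s.Countable → ∀ p : ∀ ξ, θ ξ, ∃ h ∈ H, ∀ ξ ∈ s, h ξ = p ξ := by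
  classical
  have hℵ₀ : ℵ₀ ≤ μ := (aleph0_le_aleph 1).trans hμ
  set M : Type u := μ.out with hMdef
  have hM : #M = μ := mk_out μ
  have hMne : Nonempty M := mk_ne_zero_iff.mp (by rw [hM]; exact (aleph0_pos.trans_le hℵ₀).ne')
  -- injection of ι into Set M
  obtain ⟨g⟩ : Nonempty (ι ↪ Set M) := by
    rw [← le_def, mk_set, hM]; exact h2
  -- surjections σ ξ : M → θ ξ
  have hj : ∀ ξ, Nonempty (θ ξ ↪ M) := fun ξ => by
    rw [← le_def, hM]; exact (Order.lt_succ_iff).mp (hθ ξ)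
  have j : ∀ ξ, θ ξ ↪ M := fun ξ => (hj ξ).some
  set σ : ∀ ξ, M → θ ξ := fun ξ => Function.invFun (j ξ) with hσdef
  have hσ : ∀ ξ, Function.Surjective (σ ξ) := fun ξ => Function.invFun_surjective (j ξ).injective
  -- codes and the guardrail map
  set F : (ℕ → M × Set ℕ × M) → ∀ ξ, θ ξ := fun c ξ =>
    if hx : ∃ n, (c n).2.1 = {k | (c k).1 ∈ g ξ} then σ ξ ((c (Nat.find hx)).2.2)
    else σ ξ (Classical.arbitrary M) with hFdef
  refine ⟨Set.range F, ?_, ?_⟩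
  · refine (mk_range_le).trans ?_
    have e1 : #(ℕ → M × Set ℕ × M) = (#(M × Set ℕ × M)) ^ (ℵ₀ : Cardinal.{u}) := by
      rw [mk_arrow]; simp
    rw [e1]
    have hX : #(M × Set ℕ × M) ≤ μ ^ (ℵ₀ : Cardinal.{u}) := by
      have h2μ : (2 : Cardinal.{u}) ≤ μ := ((nat_lt_aleph0 2).le.trans hℵ₀).trans_eq' (by norm_num)
      have h2ℵ₀ : (2 : Cardinal.{u}) ^ (ℵ₀ : Cardinal.{u}) ≤ μ ^ (ℵ₀ : Cardinal.{u}) :=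
        power_le_power_right h2μ
      have hμpow : μ ≤ μ ^ (ℵ₀ : Cardinal.{u}) := self_le_power μ (one_le_aleph0)
      have hinf : ℵ₀ ≤ μ ^ (ℵ₀ : Cardinal.{u}) := hℵ₀.trans hμpow
      have hsetN : #(Set ℕ) = (2 : Cardinal.{0}) ^ (ℵ₀ : Cardinal.{0}) := by
        rw [mk_set, mk_nat]
      calc #(M × Set ℕ × M)
          = #M * (lift.{u} #(Set ℕ) * #M) := by
            rw [mk_prod, mk_prod]; simp
        _ = μ * ((2 : Cardinal.{u}) ^ (ℵ₀ : Cardinal.{u}) * μ) := by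
            rw [hM, hsetN]; simp
        _ ≤ μ ^ (ℵ₀ : Cardinal.{u}) * (μ ^ (ℵ₀ : Cardinal.{u}) * μ ^ (ℵ₀ : Cardinal.{u})) := by
            gcongr
        _ = μ ^ (ℵ₀ : Cardinal.{u}) := by
            rw [mul_eq_self hinf, mul_eq_self hinf]
    calc (#(M × Set ℕ × M)) ^ (ℵ₀ : Cardinal.{u}) ≤ (μ ^ (ℵ₀ : Cardinal.{u})) ^ (ℵ₀ : Cardinal.{u}) :=
          power_le_power_right hX
      _ = μ ^ (ℵ₀ * ℵ₀ : Cardinal.{u}) := power_mul.symm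
      _ = μ ^ (ℵ₀ : Cardinal.{u}) := by rw [aleph0_mul_aleph0]
  · intro s hs p
    rcases s.eq_empty_or_nonempty with rfl | hne
    · exact ⟨F (fun _ => (Classical.arbitrary M, ∅, Classical.arbitrary M)),
        Set.mem_range_self _, by simp⟩
    obtain ⟨f, rfl⟩ := hs.exists_eq_range hne
    have sep : ∀ m n : ℕ, f m ≠ f n → ∃ x : M, ¬ (x ∈ g (f m) ↔ x ∈ g (f n)) := by
      intro m n hmn
      have hgn : g (f m) ≠ g (f n) := fun h => hmn (g.injective h)
      rw [Ne, Set.ext_iff] at hgn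
      push_neg at hgn
      obtain ⟨x, hx⟩ := hgn
      exact ⟨x, by tauto⟩
    set a : ℕ → M := fun k =>
      if h : f (Nat.unpair k).1 ≠ f (Nat.unpair k).2
      then (sep (Nat.unpair k).1 (Nat.unpair k).2 h).choose
      else Classical.arbitrary M with hadef
    set τ : ι → Set ℕ := fun ξ => {k | a k ∈ g ξ} with hτdef
    have key : ∀ m n : ℕ, τ (f m) = τ (f n) → f m = f n := by
      intro m n hτe
      by_contra hmn
      have hiff : a (Nat.pair m n) ∈ g (f m) ↔ a (Nat.pair m n) ∈ g (f n) :=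
        Set.ext_iff.mp hτe (Nat.pair m n)
      have ha : a (Nat.pair m n) = (sep m n hmn).choose := by
        rw [hadef]; simp only [Nat.unpair_pair]; rw [dif_pos hmn]
      rw [ha] at hiff
      exact (sep m n hmn).choose_spec hiff
    have hv : ∀ n : ℕ, ∃ w : M, σ (f n) w = p (f n) := fun n => hσ (f n) (p (f n))
    choose v hvs using hv
    set c : ℕ → M × Set ℕ × M := fun n => (a n, τ (f n), v n) with hcdef
    refine ⟨F c, Set.mem_range_self _, ?_⟩
    rintro ξ ⟨k, rfl⟩
    have hx : ∃ n, (c n).2.1 = {k' | (c k').1 ∈ g (f k)} := ⟨k, rfl⟩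
    have hFc : F c (f k) = σ (f k) ((c (Nat.find hx)).2.2) := by
      rw [hFdef]; exact dif_pos hx
    have hkey : f (Nat.find hx) = f k := key _ _ (Nat.find_spec hx)
    obtain ⟨n₀, hn₀⟩ : ∃ n, Nat.find hx = n := ⟨_, rfl⟩
    rw [hn₀] at hFc hkey
    rw [hFc, show (c n₀).2.2 = v n₀ from rfl, ← hkey]
    exact hvs n₀
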